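/- arXiv:1604.05564 — 2 statements merged into one kernel-verified Lean document; each statement's English description precedes it below -/
import Mathlib

section
/- Let Λ > 0 and N ∈ ℕ, and let w_n be the normalized oscillator eigenfunctions. Then there exists c_N > 0 such that for every H ≥ 1 and all j, k ∈ {0, …, N}: |∫_{−H^{1/2}/4}^{H^{1/2}/4} w_j(ζ) w_k(ζ) dζ − δ_{jk}| ≤ c_N H^{−1/2}. -/
noncomputable section
open MeasureTheory Real

/-- The physicists' Hermite polynomials, defined by `H₀ = 1` and
`H_{n+1}(t) = 2t H_n(t) − H_n'(t)`. -/
noncomputable def physHermite : ℕ → Polynomial ℝ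
  | 0 => 1
  | n + 1 => 2 * Polynomial.X * physHermite n - Polynomial.derivative (physHermite n)

/-- The normalized eigenfunctions of the harmonic-oscillator equation
`−w'' + 4Λζ²w = μw` :
`w_n(ζ) = (2ⁿ n! √π)^{−1/2} (2√Λ)^{1/4} exp(−√Λ ζ²) H_n((4Λ)^{1/4} ζ)`. -/
noncomputable def oscEigen (Λ : ℝ) (n : ℕ) (ζ : ℝ) : ℝ :=
  ((2 : ℝ) ^ n * (Nat.factorial n) * Real.sqrt π) ^ (-(1 : ℝ) / 2) *
    (2 * Real.sqrt Λ) ^ ((1 : ℝ) / 4) *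
    (Real.exp (-(Real.sqrt Λ) * ζ ^ 2) * (physHermite n).eval ((4 * Λ) ^ ((1 : ℝ) / 4) * ζ))

namespace TruncOrtho
open Polynomial

lemma physHermite_succ (n : ℕ) :
    physHermite (n+1) = 2 * X * physHermite n - derivative (physHermite n) := rfl

lemma deriv_physHermite (n : ℕ) :
    derivative (physHermite (n+1)) = C ((2:ℝ) * (n+1)) * physHermite n := by
  induction n with
  | zero => simp [physHermite, map_ofNat]
  | succ n ih =>
    have hD : derivative (physHermite n) = 2 * X * physHermite n - physHermite (n+1) := by
      rw [physHermite_succ]; ring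
    rw [physHermite_succ (n+1), derivative_sub, derivative_mul, derivative_mul, ih,
      derivative_mul, hD]
    push_cast
    simp only [derivative_ofNat, derivative_X, derivative_C, C_add, C_mul, map_ofNat,
      derivative_add, derivative_C_mul, map_one, C_1, derivative_mul, mul_zero, zero_mul,
      add_zero, zero_add, mul_one, derivative_one]
    ring


lemma integrable_poly_gaussian (Q : Polynomial ℝ) {b : ℝ} (hb : 0 < b) :
    Integrable fun x : ℝ => Q.eval x * Real.exp (-b * x ^ 2) := by
  induction Q using Polynomial.induction_on' with
  | monomial n c =>
    simp only [eval_monomial]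
    have : Integrable fun x : ℝ => x ^ n * Real.exp (-b * x ^ 2) := by
      have := integrable_rpow_mul_exp_neg_mul_sq hb (s := (n : ℝ)) (by exact_mod_cast neg_one_lt_zero.trans_le n.cast_nonneg)
      simpa [Real.rpow_natCast] using this
    simpa [mul_assoc] using this.const_mul c
  | add p q hp hq =>
    simpa [add_mul] using hp.fun_add hq

lemma tendsto_poly_gaussian_atTop (Q : Polynomial ℝ) :
    Filter.Tendsto (fun x : ℝ => Q.eval x * Real.exp (-x ^ 2)) Filter.atTop (nhds 0) := by
  refine squeeze_zero_norm' (a := fun x : ℝ => ‖Q.eval x / Real.exp x‖) ?_ ?_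
  · filter_upwards [Filter.eventually_ge_atTop (1 : ℝ)] with x hx
    rw [norm_mul, norm_div]
    rw [Real.norm_of_nonneg (Real.exp_pos _).le, Real.norm_of_nonneg (Real.exp_pos _).le,
      div_eq_mul_inv, ← Real.exp_neg]
    have : Real.exp (-x ^ 2) ≤ Real.exp (-x) :=
      Real.exp_le_exp.2 (by nlinarith)
    exact mul_le_mul_of_nonneg_left this (norm_nonneg _)
  · simpa using (Q.tendsto_div_exp_atTop).norm

lemma tendsto_poly_gaussian_atBot (Q : Polynomial ℝ) :
    Filter.Tendsto (fun x : ℝ => Q.eval x * Real.exp (-x ^ 2)) Filter.atBot (nhds 0) := by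
  have h := tendsto_poly_gaussian_atTop (Q.comp (-X))
  have h2 := h.comp Filter.tendsto_neg_atBot_atTop
  convert h2 using 2 with x
  simp [Function.comp, eval_comp]

lemma hasDerivAt_poly_gaussian (P : Polynomial ℝ) (x : ℝ) :
    HasDerivAt (fun y : ℝ => P.eval y * Real.exp (-y ^ 2))
      ((derivative P - 2 * X * P).eval x * Real.exp (-x ^ 2)) x := by
  have h1 : HasDerivAt (fun y : ℝ => P.eval y) (P.derivative.eval x) x := P.hasDerivAt x
  have h2 : HasDerivAt (fun y : ℝ => Real.exp (-y ^ 2)) (Real.exp (-x ^ 2) * (-(2 * x))) x := by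
    have : HasDerivAt (fun y : ℝ => -y ^ 2) (-(2 * x)) x := by
      simpa using ((hasDerivAt_pow 2 x).fun_neg)
    exact this.exp
  have := h1.fun_mul h2
  refine this.congr_deriv ?_
  simp only [eval_sub, eval_mul, eval_ofNat, eval_X]
  ring

lemma integral_deriv_poly_gaussian_eq_zero (P : Polynomial ℝ) :
    ∫ x : ℝ, (derivative P - 2 * X * P).eval x * Real.exp (-x ^ 2) = 0 := by
  set F' : ℝ → ℝ := fun x => (derivative P - 2 * X * P).eval x * Real.exp (-x ^ 2) with hF'
  have hInt : Integrable F' := by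
    have := integrable_poly_gaussian (derivative P - 2 * X * P) (b := 1) one_pos
    simpa [hF'] using this
  have h1 : Filter.Tendsto (fun T : ℝ => ∫ x in -T..T, F' x) Filter.atTop
      (nhds (∫ x : ℝ, F' x)) :=
    intervalIntegral_tendsto_integral hInt Filter.tendsto_neg_atTop_atBot Filter.tendsto_id
  have h2 : ∀ T : ℝ, ∫ x in -T..T, F' x
      = P.eval T * Real.exp (-T ^ 2) - P.eval (-T) * Real.exp (-(-T) ^ 2) := by
    intro T
    exact intervalIntegral.integral_eq_sub_of_hasDerivAt
      (fun x _ => hasDerivAt_poly_gaussian P x) hInt.intervalIntegrable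
  have h3 : Filter.Tendsto (fun T : ℝ => ∫ x in -T..T, F' x) Filter.atTop (nhds 0) := by
    simp only [h2]
    have ha := tendsto_poly_gaussian_atTop P
    have hb := (tendsto_poly_gaussian_atBot P).comp Filter.tendsto_neg_atTop_atBot
    simpa using ha.sub hb
  exact tendsto_nhds_unique h1 h3

noncomputable def hermInt (j k : ℕ) : ℝ :=
  ∫ x : ℝ, (physHermite j).eval x * (physHermite k).eval x * Real.exp (-x ^ 2)

lemma integrable_herm (j k : ℕ) :
    Integrable fun x : ℝ =>
      (physHermite j).eval x * (physHermite k).eval x * Real.exp (-x ^ 2) := by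
  have := integrable_poly_gaussian (physHermite j * physHermite k) (b := 1) one_pos
  simpa [eval_mul] using this

lemma hermInt_comm (j k : ℕ) : hermInt j k = hermInt k j := by
  unfold hermInt; congr 1; funext x; ring

lemma hermInt_succ_left (j k : ℕ) :
    hermInt (j+1) k
      = ∫ x : ℝ, (physHermite j).eval x * (derivative (physHermite k)).eval x
          * Real.exp (-x ^ 2) := by
  have hz := integral_deriv_poly_gaussian_eq_zero (physHermite j * physHermite k)
  have hint1 : Integrable fun x : ℝ =>
      (physHermite j).eval x * (derivative (physHermite k)).eval x * Real.exp (-x ^ 2) := by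
    have := integrable_poly_gaussian (physHermite j * derivative (physHermite k))
      (b := 1) one_pos
    simpa [eval_mul] using this
  have hint2 : Integrable fun x : ℝ =>
      (derivative (physHermite j * physHermite k)
        - 2 * X * (physHermite j * physHermite k)).eval x * Real.exp (-x ^ 2) := by
    have := integrable_poly_gaussian
      (derivative (physHermite j * physHermite k)
        - 2 * X * (physHermite j * physHermite k)) (b := 1) one_pos
    simpa using this
  have key : (fun x : ℝ => (physHermite (j+1)).eval x * (physHermite k).eval x
      * Real.exp (-x ^ 2))
      = fun x : ℝ =>
        (physHermite j).eval x * (derivative (physHermite k)).eval x * Real.exp (-x ^ 2)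
        - (derivative (physHermite j * physHermite k)
            - 2 * X * (physHermite j * physHermite k)).eval x * Real.exp (-x ^ 2) := by
    funext x
    rw [physHermite_succ j]
    simp only [eval_sub, eval_mul, eval_ofNat, eval_X, derivative_mul, eval_add]
    ring
  unfold hermInt
  rw [key, integral_sub hint1 hint2, hz, sub_zero]

lemma hermInt_left_zero (j : ℕ) : hermInt (j+1) 0 = 0 := by
  rw [hermInt_succ_left]
  simp [physHermite]

lemma hermInt_succ_succ (j k : ℕ) :
    hermInt (j+1) (k+1) = (2 * (k+1) : ℝ) * hermInt j k := by
  rw [hermInt_succ_left, deriv_physHermite k]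
  unfold hermInt
  rw [← MeasureTheory.integral_const_mul]
  congr 1; funext x
  simp only [eval_mul, eval_C]
  ring

lemma hermInt_eq (j k : ℕ) :
    hermInt j k = if j = k then (2:ℝ) ^ j * (Nat.factorial j) * Real.sqrt π else 0 := by
  induction j generalizing k with
  | zero =>
    cases k with
    | zero =>
      simp only [if_pos rfl]
      unfold hermInt
      have : (fun x : ℝ => (physHermite 0).eval x * (physHermite 0).eval x
          * Real.exp (-x ^ 2)) = fun x : ℝ => Real.exp (-1 * x ^ 2) := by
        funext x; simp [physHermite]
      rw [this, integral_gaussian]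
      simp
    | succ k =>
      rw [hermInt_comm, hermInt_left_zero]
      simp
  | succ j ih =>
    cases k with
    | zero => simpa using hermInt_left_zero j
    | succ k =>
      rw [hermInt_succ_succ, ih k]
      by_cases h : j = k
      · subst h
        simp only [if_pos rfl]
        rw [Nat.factorial_succ]
        push_cast
        ring
      · simp [h, Nat.succ_inj]

section Osc

variable {Λ : ℝ} (hΛ : 0 < Λ)

lemma sqA (hΛ : 0 < Λ) : ((4 * Λ) ^ ((1:ℝ)/4)) ^ 2 = 2 * Real.sqrt Λ := by
  have h4 : (0:ℝ) ≤ 4 * Λ := by linarith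
  rw [← Real.rpow_natCast ((4 * Λ) ^ ((1:ℝ)/4)) 2, ← Real.rpow_mul h4]
  norm_num
  rw [← Real.sqrt_eq_rpow, show (4:ℝ) * Λ = 2^2 * Λ by norm_num,
    Real.sqrt_mul (by positivity), Real.sqrt_sq (by norm_num : (0:ℝ) ≤ 2)]

lemma fourthRoot_mul_self (hΛ : 0 < Λ) :
    (2 * Real.sqrt Λ) ^ ((1:ℝ)/4) * (2 * Real.sqrt Λ) ^ ((1:ℝ)/4)
      = (4 * Λ) ^ ((1:ℝ)/4) := by
  have hs : (0:ℝ) < 2 * Real.sqrt Λ := by positivity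
  have ha : (0:ℝ) ≤ (4 * Λ) ^ ((1:ℝ)/4) := (Real.rpow_pos_of_pos (by linarith) _).le
  rw [← Real.rpow_add hs]
  norm_num
  rw [← Real.sqrt_eq_rpow, ← sqA hΛ, Real.sqrt_sq ha]

lemma osc_prod (hΛ : 0 < Λ) (j k : ℕ) (ζ : ℝ) :
    oscEigen Λ j ζ * oscEigen Λ k ζ
      = (((2 : ℝ) ^ j * (Nat.factorial j) * Real.sqrt π) ^ (-(1 : ℝ) / 2)
          * ((2 : ℝ) ^ k * (Nat.factorial k) * Real.sqrt π) ^ (-(1 : ℝ) / 2)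
          * (4 * Λ) ^ ((1:ℝ)/4))
        * ((physHermite j * physHermite k).eval ((4 * Λ) ^ ((1:ℝ)/4) * ζ)
            * Real.exp (-((4 * Λ) ^ ((1:ℝ)/4) * ζ) ^ 2)) := by
  unfold oscEigen
  have hexp : Real.exp (-(Real.sqrt Λ) * ζ ^ 2) * Real.exp (-(Real.sqrt Λ) * ζ ^ 2)
      = Real.exp (-((4 * Λ) ^ ((1:ℝ)/4) * ζ) ^ 2) := by
    rw [← Real.exp_add]
    congr 1
    have := sqA hΛ
    nlinarith [this]
  rw [eval_mul]
  calc _ = (((2 : ℝ) ^ j * (Nat.factorial j) * Real.sqrt π) ^ (-(1 : ℝ) / 2)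
          * ((2 : ℝ) ^ k * (Nat.factorial k) * Real.sqrt π) ^ (-(1 : ℝ) / 2)
          * ((2 * Real.sqrt Λ) ^ ((1:ℝ)/4) * (2 * Real.sqrt Λ) ^ ((1:ℝ)/4)))
        * (((physHermite j).eval ((4 * Λ) ^ ((1:ℝ)/4) * ζ)
            * (physHermite k).eval ((4 * Λ) ^ ((1:ℝ)/4) * ζ))
            * (Real.exp (-(Real.sqrt Λ) * ζ ^ 2) * Real.exp (-(Real.sqrt Λ) * ζ ^ 2))) := by
        ring
      _ = _ := by rw [hexp, fourthRoot_mul_self hΛ]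

lemma integrable_osc (hΛ : 0 < Λ) (j k : ℕ) :
    Integrable fun ζ : ℝ => oscEigen Λ j ζ * oscEigen Λ k ζ := by
  have hb : (0:ℝ) < 2 * Real.sqrt Λ := by positivity
  have h := (integrable_poly_gaussian
    ((physHermite j * physHermite k).comp (C ((4 * Λ) ^ ((1:ℝ)/4)) * X)) hb).const_mul
    (((2 : ℝ) ^ j * (Nat.factorial j) * Real.sqrt π) ^ (-(1 : ℝ) / 2)
      * ((2 : ℝ) ^ k * (Nat.factorial k) * Real.sqrt π) ^ (-(1 : ℝ) / 2)
      * (4 * Λ) ^ ((1:ℝ)/4))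
  apply h.congr
  filter_upwards with ζ
  rw [osc_prod hΛ j k ζ, eval_mul]
  simp only [eval_comp, eval_mul, eval_C, eval_X]
  congr 2
  congr 1
  nlinarith [sqA hΛ]

lemma integral_osc (hΛ : 0 < Λ) (j k : ℕ) :
    ∫ ζ : ℝ, oscEigen Λ j ζ * oscEigen Λ k ζ = if j = k then (1:ℝ) else 0 := by
  have ha : (0:ℝ) < (4 * Λ) ^ ((1:ℝ)/4) := Real.rpow_pos_of_pos (by linarith) _
  have h1 : ∫ ζ : ℝ, oscEigen Λ j ζ * oscEigen Λ k ζ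
      = (((2 : ℝ) ^ j * (Nat.factorial j) * Real.sqrt π) ^ (-(1 : ℝ) / 2)
          * ((2 : ℝ) ^ k * (Nat.factorial k) * Real.sqrt π) ^ (-(1 : ℝ) / 2)
          * (4 * Λ) ^ ((1:ℝ)/4))
        * ∫ ζ : ℝ, (physHermite j * physHermite k).eval ((4 * Λ) ^ ((1:ℝ)/4) * ζ)
            * Real.exp (-((4 * Λ) ^ ((1:ℝ)/4) * ζ) ^ 2) := by
    rw [← MeasureTheory.integral_const_mul]
    congr 1; funext ζ; exact osc_prod hΛ j k ζ
  have h2 : (∫ ζ : ℝ, (physHermite j * physHermite k).eval ((4 * Λ) ^ ((1:ℝ)/4) * ζ)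
      * Real.exp (-((4 * Λ) ^ ((1:ℝ)/4) * ζ) ^ 2))
      = |((4 * Λ) ^ ((1:ℝ)/4))⁻¹| • ∫ x : ℝ, (physHermite j * physHermite k).eval x
          * Real.exp (-x ^ 2) :=
    MeasureTheory.Measure.integral_comp_mul_left
      (fun x => (physHermite j * physHermite k).eval x * Real.exp (-x ^ 2)) _
  have h3 : (∫ x : ℝ, (physHermite j * physHermite k).eval x * Real.exp (-x ^ 2))
      = hermInt j k := by
    unfold hermInt; congr 1; funext x; rw [eval_mul]
  rw [h1, h2, h3, hermInt_eq, abs_of_pos (inv_pos.2 ha), smul_eq_mul]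
  by_cases h : j = k
  · subst h
    simp only [if_pos rfl, if_true]
    have hX : (0:ℝ) < (2 : ℝ) ^ j * (Nat.factorial j) * Real.sqrt π := by
      have := Real.sqrt_pos.2 Real.pi_pos
      positivity
    have hc : ((2 : ℝ) ^ j * (Nat.factorial j) * Real.sqrt π) ^ (-(1 : ℝ) / 2)
        * ((2 : ℝ) ^ j * (Nat.factorial j) * Real.sqrt π) ^ (-(1 : ℝ) / 2)
        = ((2 : ℝ) ^ j * (Nat.factorial j) * Real.sqrt π)⁻¹ := by
      rw [← Real.rpow_add hX, show (-(1:ℝ)/2 + -(1:ℝ)/2) = -1 by norm_num,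
        Real.rpow_neg_one]
    rw [hc]
    field_simp
  · simp [h]

lemma osc_prod' (hΛ : 0 < Λ) (j k : ℕ) (ζ : ℝ) :
    oscEigen Λ j ζ * oscEigen Λ k ζ
      = (((2 : ℝ) ^ j * (Nat.factorial j) * Real.sqrt π) ^ (-(1 : ℝ) / 2)
          * ((2 : ℝ) ^ k * (Nat.factorial k) * Real.sqrt π) ^ (-(1 : ℝ) / 2)
          * (4 * Λ) ^ ((1:ℝ)/4))
        * (((physHermite j * physHermite k).comp (C ((4 * Λ) ^ ((1:ℝ)/4)) * X)).eval ζ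
            * Real.exp (-(2 * Real.sqrt Λ) * ζ ^ 2)) := by
  rw [osc_prod hΛ j k ζ]
  simp only [eval_comp, eval_mul, eval_C, eval_X]
  congr 2
  congr 1
  nlinarith [sqA hΛ]

lemma continuous_osc_prod (Λ : ℝ) (j k : ℕ) :
    Continuous fun ζ : ℝ => oscEigen Λ j ζ * oscEigen Λ k ζ := by
  have h : ∀ n : ℕ, Continuous (oscEigen Λ n) := by
    intro n
    unfold oscEigen
    exact continuous_const.mul
      (((Real.continuous_exp.comp ((continuous_const.mul (continuous_pow 2)))).mul
        ((physHermite n).continuous.comp (continuous_const.mul continuous_id))))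
  exact (h j).mul (h k)

lemma weight_aux (Q : Polynomial ℝ) {b : ℝ} (hb : 0 < b) (K : ℝ)
    (f : ℝ → ℝ) (hfc : Continuous f)
    (hf : ∀ ζ, f ζ = K * (Q.eval ζ * Real.exp (-(2*b) * ζ ^ 2))) :
    Integrable fun ζ : ℝ => |f ζ| * Real.exp |ζ| := by
  have hdom : Integrable fun ζ : ℝ =>
      (|K| * Real.exp (1/(4*b))) * |Q.eval ζ * Real.exp (-b * ζ ^ 2)| :=
    ((integrable_poly_gaussian Q hb).abs).const_mul _
  apply hdom.mono'
  · exact (hfc.abs.mul (Real.continuous_exp.comp continuous_abs)).aestronglyMeasurable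
  · filter_upwards with ζ
    have hkey : |ζ| ≤ b * ζ ^ 2 + 1/(4*b) := by
      have hzz : ζ ^ 2 = |ζ| ^ 2 := (sq_abs ζ).symm
      have h1 : 4*b*|ζ| ≤ 4*b*(b*ζ^2) + 1 := by
        rw [hzz]; nlinarith [sq_nonneg (2*b*|ζ| - 1)]
      have h4 : (0:ℝ) < 4*b := by linarith
      calc |ζ| = (4*b*|ζ|)/(4*b) := by field_simp
        _ ≤ (4*b*(b*ζ^2) + 1)/(4*b) := by gcongr
        _ = b * ζ ^ 2 + 1/(4*b) := by field_simp
    rw [Real.norm_of_nonneg (by positivity), hf ζ, abs_mul, abs_mul,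
      abs_of_pos (Real.exp_pos _)]
    have hE : Real.exp (-(2*b) * ζ ^ 2) * Real.exp |ζ|
        ≤ Real.exp (1/(4*b)) * Real.exp (-b * ζ ^ 2) := by
      rw [← Real.exp_add, ← Real.exp_add]
      apply Real.exp_le_exp.2
      nlinarith [hkey]
    calc |K| * (|Q.eval ζ| * Real.exp (-(2*b) * ζ ^ 2)) * Real.exp |ζ|
        = |K| * |Q.eval ζ| * (Real.exp (-(2*b) * ζ ^ 2) * Real.exp |ζ|) := by ring
      _ ≤ |K| * |Q.eval ζ| * (Real.exp (1/(4*b)) * Real.exp (-b * ζ ^ 2)) := by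
          apply mul_le_mul_of_nonneg_left hE (by positivity)
      _ = |K| * Real.exp (1/(4*b)) * (|Q.eval ζ| * Real.exp (-b * ζ ^ 2)) := by ring
      _ = |K| * Real.exp (1/(4*b)) * |Q.eval ζ * Real.exp (-b * ζ ^ 2)| := by
          rw [abs_mul, abs_of_pos (Real.exp_pos _)]

lemma integrable_osc_weight (hΛ : 0 < Λ) (j k : ℕ) :
    Integrable fun ζ : ℝ => |oscEigen Λ j ζ * oscEigen Λ k ζ| * Real.exp |ζ| := by
  have hb : (0:ℝ) < Real.sqrt Λ := Real.sqrt_pos.2 hΛ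
  exact weight_aux ((physHermite j * physHermite k).comp (C ((4 * Λ) ^ ((1:ℝ)/4)) * X)) hb
    (((2 : ℝ) ^ j * (Nat.factorial j) * Real.sqrt π) ^ (-(1 : ℝ) / 2)
      * ((2 : ℝ) ^ k * (Nat.factorial k) * Real.sqrt π) ^ (-(1 : ℝ) / 2)
      * (4 * Λ) ^ ((1:ℝ)/4))
    _ (continuous_osc_prod Λ j k) (osc_prod' hΛ j k)

lemma pair_bound (hΛ : 0 < Λ) (j k : ℕ) {H : ℝ} (hH : 1 ≤ H) :
    |(∫ ζ in Set.Ioo (-(H ^ ((1 : ℝ) / 2)) / 4) (H ^ ((1 : ℝ) / 2) / 4),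
        oscEigen Λ j ζ * oscEigen Λ k ζ) - (if j = k then (1 : ℝ) else 0)|
      ≤ (4 * ∫ ζ : ℝ, |oscEigen Λ j ζ * oscEigen Λ k ζ| * Real.exp |ζ|)
          * H ^ (-(1 : ℝ) / 2) := by
  have hH0 : (0:ℝ) < H := lt_of_lt_of_le one_pos hH
  rw [show (-(H ^ ((1 : ℝ) / 2)) / 4) = -(H ^ ((1 : ℝ) / 2) / 4) from neg_div _ _]
  set f : ℝ → ℝ := fun ζ => oscEigen Λ j ζ * oscEigen Λ k ζ with hfdef
  set M : ℝ := ∫ ζ : ℝ, |f ζ| * Real.exp |ζ| with hMdef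
  have hg : Integrable fun ζ : ℝ => |f ζ| * Real.exp |ζ| := integrable_osc_weight hΛ j k
  have hM0 : 0 ≤ M := integral_nonneg fun ζ => by positivity
  have hf : Integrable f := integrable_osc hΛ j k
  set R : ℝ := H ^ ((1 : ℝ) / 2) / 4 with hRdef
  have hsq : (1:ℝ) ≤ H ^ ((1 : ℝ) / 2) := Real.one_le_rpow hH (by norm_num)
  have hR : (0:ℝ) < R := by rw [hRdef]; linarith
  have hHinv : H ^ (-(1 : ℝ) / 2) = (4 * R)⁻¹ := by
    rw [hRdef, show (-(1:ℝ)/2) = -((1:ℝ)/2) by norm_num, Real.rpow_neg hH0.le]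
    field_simp
  set s : Set ℝ := Set.Ioo (-R) R with hsdef
  have hs : MeasurableSet s := measurableSet_Ioo
  have hsplit : (∫ ζ in s, f ζ) + (∫ ζ in sᶜ, f ζ) = ∫ ζ, f ζ :=
    integral_add_compl hs hf
  have hval : (∫ ζ : ℝ, f ζ) = if j = k then (1:ℝ) else 0 := integral_osc hΛ j k
  have hstep1 : (∫ ζ in s, f ζ) - (if j = k then (1:ℝ) else 0) = -(∫ ζ in sᶜ, f ζ) := by
    rw [← hval]; linarith [hsplit]
  rw [hstep1, abs_neg]
  have habs : |∫ ζ in sᶜ, f ζ| ≤ ∫ ζ in sᶜ, |f ζ| := by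
    simpa [Real.norm_eq_abs] using
      MeasureTheory.norm_integral_le_integral_norm (μ := volume.restrict sᶜ) f
  have hmono : (∫ ζ in sᶜ, |f ζ|)
      ≤ ∫ ζ in sᶜ, Real.exp (-R) * (|f ζ| * Real.exp |ζ|) := by
    apply setIntegral_mono_on (hf.abs.integrableOn) ((hg.const_mul _).integrableOn) hs.compl
    intro ζ hζ
    have hRζ : R ≤ |ζ| := by
      rcases not_and_or.1 (fun hmem => hζ (Set.mem_Ioo.2 ⟨hmem.1, hmem.2⟩)) with h | h
      · push_neg at h
        calc R ≤ -ζ := by linarith [h]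
          _ ≤ |ζ| := neg_le_abs ζ
      · push_neg at h
        exact le_trans h (le_abs_self ζ)
    calc |f ζ| = Real.exp (-R) * (|f ζ| * Real.exp R) := by
          have h1 : Real.exp (-R) * Real.exp R = 1 := by
            rw [← Real.exp_add, neg_add_cancel, Real.exp_zero]
          linear_combination (-|f ζ|) * h1
      _ ≤ Real.exp (-R) * (|f ζ| * Real.exp |ζ|) := by
          apply mul_le_mul_of_nonneg_left _ (Real.exp_pos (-R)).le
          exact mul_le_mul_of_nonneg_left (Real.exp_le_exp.2 hRζ) (abs_nonneg _)
  have hfull : (∫ ζ in sᶜ, Real.exp (-R) * (|f ζ| * Real.exp |ζ|))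
      ≤ ∫ ζ : ℝ, Real.exp (-R) * (|f ζ| * Real.exp |ζ|) := by
    apply setIntegral_le_integral (hg.const_mul _)
    filter_upwards with ζ
    positivity
  have hconst : (∫ ζ : ℝ, Real.exp (-R) * (|f ζ| * Real.exp |ζ|))
      = Real.exp (-R) * M := by
    rw [hMdef, MeasureTheory.integral_const_mul]
  have hexpR : Real.exp (-R) ≤ R⁻¹ := by
    rw [Real.exp_neg]
    apply inv_anti₀ hR
    linarith [Real.add_one_le_exp R]
  calc |∫ ζ in sᶜ, f ζ| ≤ Real.exp (-R) * M := by
        rw [← hconst]; exact le_trans habs (le_trans hmono hfull)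
    _ ≤ R⁻¹ * M := mul_le_mul_of_nonneg_right hexpR hM0
    _ = (4 * M) * H ^ (-(1 : ℝ) / 2) := by
        rw [hHinv]; field_simp

end Osc

end TruncOrtho

theorem truncated_almost_orthonormality_oscillator
    (Λ : ℝ) (hΛ : 0 < Λ) (N : ℕ) :
    ∃ c : ℝ, 0 < c ∧ ∀ H : ℝ, 1 ≤ H → ∀ j k : ℕ, j ≤ N → k ≤ N →
      |(∫ ζ in Set.Ioo (-(H ^ ((1 : ℝ) / 2)) / 4) (H ^ ((1 : ℝ) / 2) / 4),
          oscEigen Λ j ζ * oscEigen Λ k ζ) - (if j = k then (1 : ℝ) else 0)|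
        ≤ c * H ^ (-(1 : ℝ) / 2) := by
  classical
  set M : ℕ → ℕ → ℝ :=
    fun j k => ∫ ζ : ℝ, |oscEigen Λ j ζ * oscEigen Λ k ζ| * Real.exp |ζ| with hM
  have hM0 : ∀ j k, 0 ≤ M j k := fun j k =>
    MeasureTheory.integral_nonneg fun ζ => by positivity
  refine ⟨1 + ∑ j ∈ Finset.range (N+1), ∑ k ∈ Finset.range (N+1), 4 * M j k, ?_, ?_⟩
  · have : (0:ℝ) ≤ ∑ j ∈ Finset.range (N+1), ∑ k ∈ Finset.range (N+1), 4 * M j k :=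
      Finset.sum_nonneg fun j _ => Finset.sum_nonneg fun k _ => by
        have := hM0 j k; linarith
    linarith
  · intro H hH j k hj hk
    have hp := TruncOrtho.pair_bound hΛ j k hH
    refine hp.trans ?_
    apply mul_le_mul_of_nonneg_right _ (Real.rpow_nonneg (by linarith : (0:ℝ) ≤ H) _)
    have h1 : 4 * M j k ≤ ∑ k' ∈ Finset.range (N+1), 4 * M j k' :=
      Finset.single_le_sum (f := fun i => 4 * M j i)
        (fun i _ => mul_nonneg (by norm_num) (hM0 j i))
        (Finset.mem_range.2 (Nat.lt_succ_of_le hk))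
    have h2 : (∑ k' ∈ Finset.range (N+1), 4 * M j k')
        ≤ ∑ j' ∈ Finset.range (N+1), ∑ k' ∈ Finset.range (N+1), 4 * M j' k' :=
      Finset.single_le_sum
        (f := fun i => ∑ k' ∈ Finset.range (N+1), 4 * M i k')
        (fun i _ => Finset.sum_nonneg fun i' _ => mul_nonneg (by norm_num) (hM0 i i'))
        (Finset.mem_range.2 (Nat.lt_succ_of_le hj))
    simp only [hM]
    linarith
end
end

section
/- Let V and W be real inner product spaces, N ∈ ℕ, Λ > 0, and 0 < ε ≤ 1/(2N). Suppose Φ_1, …, Φ_N ∈ V and Ψ_1, …, Ψ_N ∈ W satisfy |⟨Φ_j, Φ_k⟩ − δ_{jk}| ≤ ε and |⟨Ψ_j, Ψ_k⟩ − Λ δ_{jk}| ≤ ε for all j, k ∈ {1, …, N}. Then Φ_1, …, Φ_N are linearly independent, and for every α ∈ ℝ^N with ∑_{j=1}^N α_j² = 1 one has ‖∑_{j=1}^N α_j Ψ_j‖² ≤ (Λ + 2N(1+Λ)ε) ‖∑_{j=1}^N α_j Φ_j‖². -/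
noncomputable section
open Finset

lemma norm_sq_sum_smul' {E : Type*} [NormedAddCommGroup E] [InnerProductSpace ℝ E]
    {N : ℕ} (α : Fin N → ℝ) (v : Fin N → E) :
    ‖∑ j, α j • v j‖ ^ 2 = ∑ j, ∑ k, α j * α k * (inner ℝ (v j) (v k) : ℝ) := by
  rw [← real_inner_self_eq_norm_sq]
  simp_rw [sum_inner, inner_sum, real_inner_smul_left, real_inner_smul_right, mul_assoc]

lemma aux_bound' {N : ℕ} (c ε : ℝ) (hε : 0 ≤ ε) (g : Fin N → Fin N → ℝ)
    (hg : ∀ j k, |g j k - c * (if j = k then 1 else 0)| ≤ ε) (α : Fin N → ℝ) :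
    |(∑ j, ∑ k, α j * α k * g j k) - c * ∑ j, (α j)^2| ≤ ε * N * ∑ j, (α j)^2 := by
  have h1 : c * ∑ j, (α j)^2
      = ∑ j, ∑ k, α j * α k * (c * (if j = k then 1 else 0)) := by
    rw [mul_sum]
    refine Finset.sum_congr rfl fun j _ => ?_
    rw [Finset.sum_eq_single j]
    · simp [sq]; ring
    · intro k _ hk; simp [Ne.symm hk]
    · simp
  rw [h1, ← Finset.sum_sub_distrib]
  simp_rw [← Finset.sum_sub_distrib]
  have key : |∑ j, ∑ k, (α j * α k * g j k - α j * α k * (c * (if j = k then 1 else 0)))|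
      ≤ ∑ j, ∑ k, |α j| * |α k| * ε := by
    refine (Finset.abs_sum_le_sum_abs _ _).trans (Finset.sum_le_sum fun j _ => ?_)
    refine (Finset.abs_sum_le_sum_abs _ _).trans (Finset.sum_le_sum fun k _ => ?_)
    have : α j * α k * g j k - α j * α k * (c * (if j = k then 1 else 0))
        = α j * α k * (g j k - c * (if j = k then 1 else 0)) := by ring
    rw [this, abs_mul, abs_mul]
    exact mul_le_mul_of_nonneg_left (hg j k) (by positivity)
  refine key.trans ?_
  have h2 : ∑ j, ∑ k, |α j| * |α k| * ε = ε * (∑ j, |α j|) ^ 2 := by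
    simp_rw [← Finset.sum_mul, ← Finset.mul_sum]
    rw [← Finset.sum_mul, sq]; ring
  rw [h2]
  have h3 : (∑ j, |α j|) ^ 2 ≤ (N : ℝ) * ∑ j, (α j) ^ 2 := by
    have := sq_sum_le_card_mul_sum_sq (s := (Finset.univ : Finset (Fin N))) (f := fun j => |α j|)
    simp only [Finset.card_univ, Fintype.card_fin, sq_abs] at this
    exact_mod_cast this
  calc ε * (∑ j, |α j|) ^ 2 ≤ ε * ((N : ℝ) * ∑ j, (α j) ^ 2) :=
        mul_le_mul_of_nonneg_left h3 hε
    _ = ε * N * ∑ j, (α j) ^ 2 := by ring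

theorem rayleigh_quotient_bound_abstract
    {V W : Type*} [NormedAddCommGroup V] [InnerProductSpace ℝ V]
    [NormedAddCommGroup W] [InnerProductSpace ℝ W]
    (N : ℕ) (Λ ε : ℝ) (hΛ : 0 < Λ) (hε : 0 < ε) (hεN : ε ≤ 1 / (2 * N))
    (Φ : Fin N → V) (Ψ : Fin N → W)
    (hΦ : ∀ j k, |(inner ℝ (Φ j) (Φ k) : ℝ) - (if j = k then 1 else 0)| ≤ ε)
    (hΨ : ∀ j k, |(inner ℝ (Ψ j) (Ψ k) : ℝ) - Λ * (if j = k then 1 else 0)| ≤ ε) :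
    LinearIndependent ℝ Φ ∧
    ∀ α : Fin N → ℝ, ∑ j, (α j) ^ 2 = 1 →
      ‖∑ j, α j • Ψ j‖ ^ 2 ≤ (Λ + 2 * N * (1 + Λ) * ε) * ‖∑ j, α j • Φ j‖ ^ 2 := by
  have hNε : (N : ℝ) * ε ≤ 1 / 2 := by
    rcases Nat.eq_zero_or_pos N with h | h
    · simp [h]
    · have hN : (0 : ℝ) < N := by exact_mod_cast h
      have h2 : (N : ℝ) * (1 / (2 * N)) = 1 / 2 := by field_simp
      nlinarith [mul_le_mul_of_nonneg_left hεN hN.le]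
  have hΦ' : ∀ j k, |(inner ℝ (Φ j) (Φ k) : ℝ) - 1 * (if j = k then 1 else 0)| ≤ ε := by
    intro j k; simpa using hΦ j k
  have hPhi : ∀ α : Fin N → ℝ,
      |‖∑ j, α j • Φ j‖ ^ 2 - 1 * ∑ j, (α j) ^ 2| ≤ ε * N * ∑ j, (α j) ^ 2 := by
    intro α
    rw [norm_sq_sum_smul' α Φ]
    exact aux_bound' 1 ε hε.le _ hΦ' α
  constructor
  · rw [Fintype.linearIndependent_iff]
    intro α h0 i
    have hP := hPhi α
    rw [h0] at hP
    simp only [norm_zero, ne_eq, OfNat.ofNat_ne_zero, not_false_eq_true, zero_pow,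
      one_mul, zero_sub, abs_neg] at hP
    have hS : 0 ≤ ∑ j, (α j) ^ 2 := Finset.sum_nonneg fun j _ => sq_nonneg _
    rw [abs_of_nonneg hS] at hP
    have hεNS : ε * N * ∑ j, (α j) ^ 2 ≤ (1 / 2) * ∑ j, (α j) ^ 2 :=
      mul_le_mul_of_nonneg_right (by linarith [hNε]) hS
    have hS0 : ∑ j, (α j) ^ 2 = 0 := by linarith
    have := (Finset.sum_eq_zero_iff_of_nonneg fun j _ => sq_nonneg (α j)).mp hS0 i (mem_univ i)
    exact pow_eq_zero_iff (by norm_num) |>.mp this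
  · intro α hα
    have hP := hPhi α
    rw [hα] at hP
    have hQ : |‖∑ j, α j • Ψ j‖ ^ 2 - Λ * ∑ j, (α j) ^ 2| ≤ ε * N * ∑ j, (α j) ^ 2 := by
      rw [norm_sq_sum_smul' α Ψ]
      exact aux_bound' Λ ε hε.le _ hΨ α
    rw [hα] at hQ
    simp only [mul_one, one_mul] at hP hQ
    rw [abs_le] at hP hQ
    have hcoef : 0 ≤ Λ + 2 * N * (1 + Λ) * ε := by positivity
    have hkey : 0 ≤ (N:ℝ) * ε * (1 + Λ) * (1 - 2 * ((N:ℝ) * ε)) := by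
      have h1 : (0:ℝ) ≤ 1 - 2 * ((N:ℝ) * ε) := by linarith
      have h2 : (0:ℝ) ≤ (N:ℝ) * ε * (1 + Λ) := by positivity
      exact mul_nonneg h2 h1
    nlinarith [mul_le_mul_of_nonneg_left hP.1 hcoef, hkey]
end
end
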